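/- arXiv:1211.5857 — 2 statements merged into one kernel-verified Lean document; each statement's English description precedes it below -/
import Mathlib

section
/- Suppose σ_1 ≤ σ_2 ≤ ⋯ ≤ σ_N with all σ_f > 0, and define φ_k = ∑_{i=1}^k (σ_k − σ_i) for 1 ≤ k ≤ N and φ_{N+1} = ∞. Then for any P_max > 0 there exists a unique index k ∈ {1,…,N} with φ_k < P_max ≤ φ_{k+1}, and the water level t = (P_max + ∑_{i=1}^k σ_i)/k satisfies σ_k < t ≤ σ_{k+1} (with the last inequality vacuous for k = N), so that exactly the first k sub-channels receive positive power max(t − σ_f, 0) > 0. -/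
theorem stmt_8 (N : ℕ) (hN : 0 < N) (σ : ℕ → ℝ)
    (hpos : ∀ i, 1 ≤ i → i ≤ N → 0 < σ i)
    (hmono : ∀ i j, 1 ≤ i → i ≤ j → j ≤ N → σ i ≤ σ j)
    (φ : ℕ → ℝ)
    (hφ : ∀ k, 1 ≤ k → k ≤ N → φ k = ∑ i ∈ Finset.Icc 1 k, (σ k - σ i))
    (Pmax : ℝ) (hPmax : 0 < Pmax) :
    ∃! k : ℕ, 1 ≤ k ∧ k ≤ N ∧ φ k < Pmax ∧ (k = N ∨ Pmax ≤ φ (k + 1)) ∧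
      (let t := (Pmax + ∑ i ∈ Finset.Icc 1 k, σ i) / k
       σ k < t ∧ (k = N ∨ t ≤ σ (k + 1)) ∧
         (∀ f, 1 ≤ f → f ≤ k → 0 < max (t - σ f) 0) ∧
         (∀ f, k < f → f ≤ N → max (t - σ f) 0 = 0)) := by
  have hφ' : ∀ k, 1 ≤ k → k ≤ N →
      φ k = (k : ℝ) * σ k - ∑ i ∈ Finset.Icc 1 k, σ i := by
    intro k h1 h2
    rw [hφ k h1 h2, Finset.sum_sub_distrib, Finset.sum_const, Nat.card_Icc]
    simp [nsmul_eq_mul]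
  have hstep : ∀ m, 1 ≤ m → m < N →
      φ (m+1) = (m : ℝ) * σ (m+1) - ∑ i ∈ Finset.Icc 1 m, σ i := by
    intro m h1 h2
    rw [hφ' (m+1) (by omega) (by omega),
      Finset.sum_Icc_succ_top (by omega : 1 ≤ m+1)]
    push_cast
    ring
  have hmonoφ : ∀ m, 1 ≤ m → m < N → φ m ≤ φ (m+1) := by
    intro m h1 h2
    rw [hφ' m h1 (le_of_lt h2), hstep m h1 h2]
    have h := hmono m (m+1) h1 (by omega) (by omega)
    have hm : (0:ℝ) ≤ (m:ℝ) := by positivity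
    nlinarith
  have hchain : ∀ a b, 1 ≤ a → a ≤ b → b ≤ N → φ a ≤ φ b := by
    intro a b h1 hab hbN
    induction b with
    | zero => omega
    | succ n ih =>
      rcases Nat.lt_or_ge a (n+1) with h | h
      · rcases Nat.eq_zero_or_pos n with rfl | hn
        · omega
        · exact (ih (by omega) (by omega)).trans (hmonoφ n (by omega) (by omega))
      · have : a = n+1 := by omega
        simp [this]
  have hφ1 : φ 1 = 0 := by
    rw [hφ 1 le_rfl hN]; simp
  set s := (Finset.Icc 1 N).filter (fun k => φ k < Pmax) with hs
  have h1s : (1:ℕ) ∈ s := by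
    simp only [hs, Finset.mem_filter, Finset.mem_Icc]
    exact ⟨⟨le_rfl, hN⟩, by rw [hφ1]; exact hPmax⟩
  have hne : s.Nonempty := ⟨1, h1s⟩
  set k := s.max' hne with hk
  have hk_mem : k ∈ s := s.max'_mem hne
  have hk_filter := Finset.mem_filter.mp hk_mem
  have hkIcc := Finset.mem_Icc.mp hk_filter.1
  have hk1 : 1 ≤ k := hkIcc.1
  have hkN : k ≤ N := hkIcc.2
  have hφk : φ k < Pmax := hk_filter.2
  have halt : k = N ∨ Pmax ≤ φ (k+1) := by
    rcases Nat.eq_or_lt_of_le hkN with h | h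
    · exact Or.inl h
    · right
      by_contra hc
      push_neg at hc
      have : k + 1 ∈ s := by
        simp only [hs, Finset.mem_filter, Finset.mem_Icc]
        exact ⟨⟨by omega, by omega⟩, hc⟩
      have := s.le_max' _ this
      omega
  have hkpos : (0:ℝ) < (k:ℝ) := by exact_mod_cast hk1
  set S := ∑ i ∈ Finset.Icc 1 k, σ i with hS
  set t := (Pmax + S) / k with ht
  have hσkt : σ k < t := by
    rw [ht, lt_div_iff₀ hkpos]
    have := hφ' k hk1 hkN
    nlinarith [hφk]
  have htσ : k = N ∨ t ≤ σ (k+1) := by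
    rcases Nat.eq_or_lt_of_le hkN with hEq | hkltN
    · exact Or.inl hEq
    right
    have h : Pmax ≤ φ (k+1) := by
      rcases halt with h | h
      · omega
      · exact h
    rw [hstep k hk1 hkltN] at h
    rw [ht, div_le_iff₀ hkpos]
    nlinarith
  have hposf : ∀ f, 1 ≤ f → f ≤ k → 0 < max (t - σ f) 0 := by
    intro f h1 h2
    have : σ f ≤ σ k := hmono f k h1 h2 hkN
    have : 0 < t - σ f := by linarith
    exact lt_max_iff.mpr (Or.inl this)
  have hzerof : ∀ f, k < f → f ≤ N → max (t - σ f) 0 = 0 := by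
    intro f h1 h2
    have hkltN : k < N := by omega
    have h' : t ≤ σ (k+1) := by
      rcases htσ with h | h
      · omega
      · exact h
    have : σ (k+1) ≤ σ f := hmono (k+1) f (by omega) (by omega) h2
    have : t - σ f ≤ 0 := by linarith
    exact max_eq_right this
  refine ⟨k, ⟨hk1, hkN, hφk, halt, hσkt, htσ, hposf, hzerof⟩, ?_⟩
  intro k' ⟨hk'1, hk'N, hφk', halt', _⟩
  by_contra hne'
  rcases Nat.lt_or_ge k' k with h | h
  · have hk'ltN : k' < N := by omega
    rcases halt' with h' | h'
    · omega
    · have : φ (k'+1) ≤ φ k := hchain (k'+1) k (by omega) (by omega) hkN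
      linarith
  · have hkk' : k < k' := by omega
    have hkltN : k < N := by omega
    rcases halt with h' | h'
    · omega
    · have : φ (k+1) ≤ φ k' := hchain (k+1) k' (by omega) (by omega) hk'N
      linarith
end

section
/- In the perfectly symmetric two-user game restricted to the first k_2 channels, the closed-form water levels satisfy the power budget with equality: if t_2* = [(1+c)P_3^max + ∑_{i=1}^{k_2} σ_i]/k_2 and P_3^f = (t_2* − σ_f)/(1+c) for f ≤ k_2, 0 otherwise, where σ_1 ≤ ⋯ ≤ σ_N and k_2 satisfies φ_{k_2} < P_3^max ≤ φ_{k_2+1} with φ_k = (1/(1+c))∑_{i=1}^k(σ_k − σ_i), then ∑_{f=1}^N P_3^f = P_3^max and P_3^f ≥ 0 for all f. -/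
theorem stmt_9 (N : ℕ) (hN : 0 < N) (σ : ℕ → ℝ)
    (hpos : ∀ i, 1 ≤ i → i ≤ N → 0 < σ i)
    (hmono : ∀ i j, 1 ≤ i → i ≤ j → j ≤ N → σ i ≤ σ j)
    (c : ℝ) (hc : 0 < c) (hc1 : c < 1)
    (P3max : ℝ) (hP3 : 0 < P3max)
    (φ : ℕ → ℝ)
    (hφ : ∀ k, 1 ≤ k → k ≤ N →
      φ k = (1 / (1 + c)) * ∑ i ∈ Finset.Icc 1 k, (σ k - σ i))
    (k2 : ℕ) (hk2l : 1 ≤ k2) (hk2u : k2 ≤ N)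
    (hlow : φ k2 < P3max) (hhigh : k2 = N ∨ P3max ≤ φ (k2 + 1))
    (t2 : ℝ) (ht2 : t2 = ((1 + c) * P3max + ∑ i ∈ Finset.Icc 1 k2, σ i) / k2)
    (P : ℕ → ℝ)
    (hP : ∀ f, P f = if f ≤ k2 then (t2 - σ f) / (1 + c) else 0) :
    (∑ f ∈ Finset.Icc 1 N, P f = P3max) ∧ ∀ f, 1 ≤ f → f ≤ N → 0 ≤ P f := by
  have hc0 : (0:ℝ) < 1 + c := by linarith
  have hk2pos : (0:ℝ) < (k2:ℝ) := by exact_mod_cast hk2l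
  have hkt : (k2:ℝ) * t2 = (1 + c) * P3max + ∑ i ∈ Finset.Icc 1 k2, σ i := by
    rw [ht2]; field_simp
  -- key: t2 ≥ σ k2
  have hφk2 : φ k2 = (1 / (1 + c)) * ∑ i ∈ Finset.Icc 1 k2, (σ k2 - σ i) :=
    hφ k2 hk2l hk2u
  have hsum_sub : ∑ i ∈ Finset.Icc 1 k2, (σ k2 - σ i)
      = (k2:ℝ) * σ k2 - ∑ i ∈ Finset.Icc 1 k2, σ i := by
    rw [Finset.sum_sub_distrib, Finset.sum_const, Nat.card_Icc]
    simp [nsmul_eq_mul]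
  have hlow' : (k2:ℝ) * σ k2 - ∑ i ∈ Finset.Icc 1 k2, σ i < (1 + c) * P3max := by
    have := hlow
    rw [hφk2, hsum_sub, one_div, inv_mul_lt_iff₀ hc0] at this
    linarith [this]
  have ht2σ : σ k2 ≤ t2 := by
    have : (k2:ℝ) * σ k2 ≤ (k2:ℝ) * t2 := by rw [hkt]; linarith
    exact le_of_mul_le_mul_left this hk2pos
  constructor
  · have hsplit : Finset.Icc 1 N = Finset.Icc 1 k2 ∪ Finset.Icc (k2+1) N := by
      ext a
      simp only [Finset.mem_union, Finset.mem_Icc]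
      omega
    rw [hsplit, Finset.sum_union]
    · have h1 : ∑ f ∈ Finset.Icc 1 k2, P f
          = ∑ f ∈ Finset.Icc 1 k2, (t2 - σ f) / (1 + c) := by
        apply Finset.sum_congr rfl
        intro f hf
        rw [hP f, if_pos (Finset.mem_Icc.mp hf).2]
      have h2 : ∑ f ∈ Finset.Icc (k2+1) N, P f = 0 := by
        apply Finset.sum_eq_zero
        intro f hf
        have : ¬ f ≤ k2 := by
          have := (Finset.mem_Icc.mp hf).1; omega
        rw [hP f, if_neg this]
      rw [h1, h2, add_zero]
      have : ∑ f ∈ Finset.Icc 1 k2, (t2 - σ f) / (1 + c)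
          = ((k2:ℝ) * t2 - ∑ f ∈ Finset.Icc 1 k2, σ f) / (1 + c) := by
        rw [← Finset.sum_div, Finset.sum_sub_distrib, Finset.sum_const, Nat.card_Icc]
        simp [nsmul_eq_mul]
      rw [this, hkt]
      field_simp
      ring
    · apply Finset.disjoint_left.mpr
      intro a ha hb
      have h1 := Finset.mem_Icc.mp ha
      have h2 := Finset.mem_Icc.mp hb
      omega
  · intro f hf1 hfN
    rw [hP f]
    by_cases h : f ≤ k2
    · rw [if_pos h]
      have : σ f ≤ σ k2 := hmono f k2 hf1 h hk2u
      apply div_nonneg _ (le_of_lt hc0)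
      linarith
    · rw [if_neg h]
end
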